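/- Suppose Γ ⊂ ℕ₀ satisfies Γ = RΓ + L with R ≥ 2 and L ⊂ ℕ₀ finite with elements pairwise incongruent modulo R. Then the kernel G(z,x) = Σ_{γ∈Γ} z^γ e^{−2πiγx} satisfies the functional equation G(z,x) = (Σ_{l∈L} z^l e^{−2πilx}) · G(z^R, Rx) for all z in the open unit disk and x ∈ ℝ. -/

import Mathlib

open Complex Real

theorem stmt3 (Γ : Set ℕ) (R : ℕ) (hR : 2 ≤ R) (L : Finset ℕ)
    (hL : ∀ l ∈ L, ∀ l' ∈ L, l % R = l' % R → l = l')
    (hΓ : Γ = {n : ℕ | ∃ γ ∈ Γ, ∃ l ∈ L, n = R * γ + l})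
    (G : ℂ → ℝ → ℂ)
    (hG : ∀ z : ℂ, ∀ x : ℝ, G z x =
      ∑' γ : Γ, z ^ (γ : ℕ) * Complex.exp (-(2 * Real.pi * Complex.I * (γ : ℕ) * x))) :
    ∀ z : ℂ, ‖z‖ < 1 → ∀ x : ℝ,
      G z x = (∑ l ∈ L, z ^ l * Complex.exp (-(2 * Real.pi * Complex.I * l * x))) *
        G (z ^ R) (R * x) := by
  intro z hz x
  have hRpos : 0 < R := by omega
  have hnorm : ∀ (w c : ℂ) (n : ℕ), c.re = 0 → ‖w ^ n * Complex.exp c‖ = ‖w‖ ^ n := by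
    intro w c n hc
    rw [norm_mul, norm_pow, Complex.norm_exp, hc,
      Real.exp_zero, mul_one]
  have hre : ∀ (a : ℝ) (n : ℕ), (-(2 * (Real.pi : ℂ) * Complex.I * n * a)).re = 0 := by
    intro a n
    simp [Complex.mul_re, Complex.mul_im]
  -- the equivalence Γ × L ≃ Γ
  have hmem : ∀ (γ : Γ) (l : L), R * (γ : ℕ) + (l : ℕ) ∈ Γ := by
    intro γ l
    have h : R * (γ : ℕ) + (l : ℕ) ∈ {n : ℕ | ∃ γ ∈ Γ, ∃ l ∈ L, n = R * γ + l} :=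
      ⟨γ, γ.2, l, l.2, rfl⟩
    rwa [← hΓ] at h
  let φ : Γ × L → Γ := fun p => ⟨R * (p.1 : ℕ) + (p.2 : ℕ), hmem p.1 p.2⟩
  have hbij : Function.Bijective φ := by
    constructor
    · rintro ⟨⟨γ, hγ⟩, ⟨l, hl⟩⟩ ⟨⟨γ', hγ'⟩, ⟨l', hl'⟩⟩ h
      have h' : R * γ + l = R * γ' + l' := congrArg Subtype.val h
      have hll : l = l' := by
        apply hL l hl l' hl'
        have := congrArg (· % R) h'
        simpa [Nat.mul_add_mod] using this
      subst hll
      have hγγ : γ = γ' := Nat.eq_of_mul_eq_mul_left hRpos (by omega)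
      subst hγγ
      rfl
    · rintro ⟨n, hn⟩
      rw [hΓ] at hn
      obtain ⟨γ, hγ, l, hl, rfl⟩ := hn
      exact ⟨⟨⟨γ, hγ⟩, ⟨l, hl⟩⟩, rfl⟩
  let e : Γ × L ≃ Γ := Equiv.ofBijective φ hbij
  have hzR : ‖z ^ R‖ < 1 := by
    rw [norm_pow]
    calc ‖z‖ ^ R ≤ ‖z‖ ^ 1 := pow_le_pow_of_le_one (norm_nonneg z) hz.le (by omega)
    _ = ‖z‖ := pow_one _
    _ < 1 := hz
  have hsumg : Summable fun γ : Γ =>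
      ‖(z ^ R) ^ (γ : ℕ) * Complex.exp (-(2 * (Real.pi : ℂ) * Complex.I * (γ : ℕ) * ((R : ℂ) * (x : ℂ))))‖ := by
    have hs : Summable fun n : ℕ => ‖z ^ R‖ ^ n :=
      summable_geometric_of_lt_one (norm_nonneg _) hzR
    refine (hs.subtype Γ).congr fun γ => ?_
    refine (hnorm (z ^ R) _ γ.1 ?_).symm
    have : ((R : ℂ) * (x : ℂ)) = (((R : ℝ) * x : ℝ) : ℂ) := by push_cast; ring
    rw [this]
    exact hre _ _
  have hsumh : Summable fun l : L =>
      ‖z ^ (l : ℕ) * Complex.exp (-(2 * (Real.pi : ℂ) * Complex.I * (l : ℕ) * (x : ℂ)))‖ :=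
    Summable.of_finite
  rw [hG z x, hG (z ^ R) (R * x)]
  push_cast
  rw [← Finset.tsum_subtype L (fun l => z ^ l * Complex.exp (-(2 * (Real.pi : ℂ) * Complex.I * l * x)))]
  rw [tsum_mul_tsum_of_summable_norm hsumh hsumg]
  rw [← (Equiv.prodComm ↥Γ ↥L).tsum_eq, ← e.tsum_eq]
  apply tsum_congr
  rintro ⟨⟨γ, hγ⟩, ⟨l, hl⟩⟩
  show z ^ (R * γ + l) * Complex.exp (-(2 * (Real.pi : ℂ) * Complex.I * ((R * γ + l : ℕ) : ℂ) * x)) =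
    (z ^ l * Complex.exp (-(2 * (Real.pi : ℂ) * Complex.I * l * x))) *
      ((z ^ R) ^ γ * Complex.exp (-(2 * (Real.pi : ℂ) * Complex.I * γ * ((R : ℂ) * (x : ℂ)))))
  rw [pow_add, ← pow_mul, mul_mul_mul_comm (z ^ l), ← Complex.exp_add]
  congr 1
  · rw [mul_comm]
  · congr 1
    push_cast
    ring
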